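/- arXiv:1609.05044 — 7 statements merged into one kernel-verified Lean document; each statement's English description precedes it below -/
import Mathlib

section
/- For any matrices f, h in SL(2,C), the trace identity tr[f, h f h⁻¹] = (tr[f,h] − 2)(tr[f,h] − tr²(f) + 2) + 2 holds, where [x,y] = x y x⁻¹ y⁻¹ denotes the commutator. -/
set_option maxHeartbeats 2000000


open Matrix Complex
open scoped commutatorElement

noncomputable def tr (M : Matrix.SpecialLinearGroup (Fin 2) ℂ) : ℂ :=
  Matrix.trace (M : Matrix (Fin 2) (Fin 2) ℂ)

theorem trace_commutator_identity (f h : Matrix.SpecialLinearGroup (Fin 2) ℂ) :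
    tr ⁅f, h * f * h⁻¹⁆ =
      (tr ⁅f, h⁆ - 2) * (tr ⁅f, h⁆ - (tr f) ^ 2 + 2) + 2 := by
  have hf : Matrix.det (f : Matrix (Fin 2) (Fin 2) ℂ) = 1 := f.2
  have hh : Matrix.det (h : Matrix (Fin 2) (Fin 2) ℂ) = 1 := h.2
  rw [Matrix.det_fin_two] at hf hh
  simp only [tr, commutatorElement_def, Matrix.SpecialLinearGroup.coe_mul,
    _root_.mul_inv_rev, Matrix.SpecialLinearGroup.coe_inv, Matrix.adjugate_fin_two,
    Matrix.trace_fin_two, Matrix.mul_apply, Fin.sum_univ_two, Matrix.of_apply,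
    Matrix.cons_val', Matrix.cons_val_zero, Matrix.cons_val_one, Matrix.head_cons,
    Matrix.empty_val', Matrix.cons_val_fin_one, Matrix.head_fin_const]
  set a := (f : Matrix (Fin 2) (Fin 2) ℂ) 0 0 with ha
  set b := (f : Matrix (Fin 2) (Fin 2) ℂ) 0 1 with hb
  set c := (f : Matrix (Fin 2) (Fin 2) ℂ) 1 0 with hc
  set d := (f : Matrix (Fin 2) (Fin 2) ℂ) 1 1 with hd
  set p := (h : Matrix (Fin 2) (Fin 2) ℂ) 0 0 with hp
  set q := (h : Matrix (Fin 2) (Fin 2) ℂ) 0 1 with hq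
  set r := (h : Matrix (Fin 2) (Fin 2) ℂ) 1 0 with hr
  set s := (h : Matrix (Fin 2) (Fin 2) ℂ) 1 1 with hs
  linear_combination ((-4) + (-2)*q*r + 4*p*s + 2*p*q*r*s + (-2)*p^2*s^2 + (-2)*d^2*q*r + 2*d^2*p*s + c*d*q*s + c*d*q^2*r*s + (-1)*c*d*p*q + (-1)*c*d*p*q*s^2 + (-1)*c*d*p*q^2*r + c*d*p^2*q*s + 2*c^2*q^2 + 2*c^2*q^3*r + (-2)*c^2*p*q^2*s + b*d*r*s + b*d*q*r^2*s + (-1)*b*d*p*r + (-1)*b*d*p*r*s^2 + (-1)*b*d*p*q*r^2 + b*d*p^2*r*s + (-2)*b*c*s^2 + (-2)*b*c*q*r + (-2)*b*c*q*r*s^2 + 4*b*c*p*s + 2*b*c*p*s^3 + 2*b*c*p*q*r*s + (-2)*b*c*p^2 + (-2)*b*c*p^2*s^2 + (-2)*b*c*p^2*q*r + 2*b*c*p^3*s + 2*b^2*r^2 + 2*b^2*q*r^3 + (-2)*b^2*p*r^2*s + (-2)*a*d*q*r + 4*a*d*p*s + 2*a*d*p*q*r*s + (-2)*a*d*p^2*s^2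 + (-1)*a*c*q*s + (-1)*a*c*q^2*r*s + a*c*p*q + a*c*p*q*s^2 + a*c*p*q^2*r + (-1)*a*c*p^2*q*s + (-1)*a*b*r*s + (-1)*a*b*q*r^2*s + a*b*p*r + a*b*p*r*s^2 + a*b*p*q*r^2 + (-1)*a*b*p^2*r*s + (-2)*a^2*q*r + 2*a^2*p*s) * hf + (2 + (-2)*p*s + 2*d^2 + d^4*q*r + (-1)*c*d*q*s + c*d*p*q + (-1)*c*d^3*q*s + c*d^3*p*q + (-2)*c^2*q^2 + (-1)*c^2*d^2*q^2 + (-1)*b*d*r*s + b*d*p*r + (-1)*b*d^3*r*s + b*d^3*p*r + 4*b*c + 2*b*c*s^2 + (-4)*b*c*p*s + 2*b*c*p^2 + b*c*d^2*s^2 + 2*b*c*d^2*q*r + (-2)*b*c*d^2*p*s + b*c*d^2*p^2 + (-1)*b*c^2*d*q*s + b*c^2*d*p*q + (-2)*b*c^3*q^2 + (-2)*b^2*r^2 + (-1)*b^2*d^2*r^2 + (-1)*b^2*c*d*r*s + b^2*c*d*p*r + 2*b^2*c^2*s^2 + 2*b^2*c^2*q*r + (-4)*b^2*c^2*p*s +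 2*b^2*c^2*p^2 + (-2)*b^3*c*r^2 + a*c*q*s + (-1)*a*c*p*q + a*b*r*s + (-1)*a*b*p*r + a*b*c^2*q*s + (-1)*a*b*c^2*p*q + a*b^2*c*r*s + (-1)*a*b^2*c*p*r + 2*a^2 + (-1)*a^2*c^2*q^2 + a^2*b*c*s^2 + 2*a^2*b*c*q*r + (-2)*a^2*b*c*p*s + a^2*b*c*p^2 + (-1)*a^2*b^2*r^2 + a^3*c*q*s + (-1)*a^3*c*p*q + a^3*b*r*s + (-1)*a^3*b*p*r + a^4*q*r) * hh
end

section
/- If f, g ∈ SL(2,C) with tr²(f) = 2 and |tr[f,g] − 1| = 1, and h ∈ SL(2,C) satisfies h f h⁻¹ = g, then |tr²(f) − 2| + |tr[f,h] − 1| = 1. -/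
set_option maxRecDepth 10000
set_option maxHeartbeats 1000000

open Matrix Complex
open scoped commutatorElement

lemma key_identity (f h : Matrix.SpecialLinearGroup (Fin 2) ℂ)
    (hf : (tr f) ^ 2 = 2) :
    tr ⁅f, h * f * h⁻¹⁆ - 1 = (tr ⁅f, h⁆ - 1) ^ 2 := by
  have hdf' : Matrix.det (f : Matrix (Fin 2) (Fin 2) ℂ) = 1 := f.2
  have hdh' : Matrix.det (h : Matrix (Fin 2) (Fin 2) ℂ) = 1 := h.2
  set a := (f : Matrix (Fin 2) (Fin 2) ℂ) 0 0
  set b := (f : Matrix (Fin 2) (Fin 2) ℂ) 0 1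
  set c := (f : Matrix (Fin 2) (Fin 2) ℂ) 1 0
  set d := (f : Matrix (Fin 2) (Fin 2) ℂ) 1 1
  set p := (h : Matrix (Fin 2) (Fin 2) ℂ) 0 0
  set q := (h : Matrix (Fin 2) (Fin 2) ℂ) 0 1
  set r := (h : Matrix (Fin 2) (Fin 2) ℂ) 1 0
  set s := (h : Matrix (Fin 2) (Fin 2) ℂ) 1 1
  have hdf : a * d - b * c = 1 := by rw [Matrix.det_fin_two] at hdf'; exact hdf'
  have hdh : p * s - q * r = 1 := by rw [Matrix.det_fin_two] at hdh'; exact hdh'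
  have hf2 : (a + d) ^ 2 = 2 := by
    have : tr f = a + d := by simp [tr, Matrix.trace_fin_two]; rfl
    rwa [this] at hf
  have hF : (f : Matrix (Fin 2) (Fin 2) ℂ) = !![a, b; c, d] := by
    ext i j; fin_cases i <;> fin_cases j <;> rfl
  have hH : (h : Matrix (Fin 2) (Fin 2) ℂ) = !![p, q; r, s] := by
    ext i j; fin_cases i <;> fin_cases j <;> rfl
  simp only [tr, commutatorElement_def, Matrix.SpecialLinearGroup.coe_mul,
    Matrix.SpecialLinearGroup.coe_inv, hF, hH, Matrix.adjugate_fin_two_of,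
    Matrix.mul_fin_two, Matrix.trace_fin_two_of]
  linear_combination ((-2) + (4)*q*r + (8)*q^2*r^2 + (4)*p*s + (-8)*p*q*r*s + (-4)*d^2 + (4)*d^2*q^2*r^2 + (-8)*d^2*p*q*r*s + (4)*d^2*p^2*s^2 + (-2)*b*c + (4)*b*c*q^2*r^2 + (-8)*b*c*p*q*r*s + (4)*b*c*p^2*s^2 + (-2)*a*d) * hdf +
 ((4) + (-4)*q*r + (2)*d^4 + (-2)*d^4*q*r + (2)*d^4*p*s + (-2)*c*d*q*s + (2)*c*d*p*q + (-2)*c^2*q^2 + (-2)*b*d*r*s + (2)*b*d*p*r + (4)*b*c + (2)*b*c*s^2 + (-8)*b*c*q*r + (2)*b*c*p^2 + (4)*b*c*d^2 + (-4)*b*c*d^2*q*r + (4)*b*c*d^2*p*s + (-2)*b^2*r^2 + (2)*b^2*c^2 + (-2)*b^2*c^2*q*r + (2)*b^2*c^2*p*s + (2)*a*c*q*s + (-2)*a*c*p*q + (2)*a*b*r*s + (-2)*a*b*p*r) * hdh +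
 ((-2)*q*r + (-2)*q^2*r^2 + (2)*p*q*r*s + (2)*d^2 + (-3)*d^2*q^2*r^2 + (5)*d^2*p*q*r*s + (-2)*d^2*p^2*s^2 + (1)*c*d*q^2*r*s + (-1)*c*d*p*q*s^2 + (-1)*c*d*p*q^2*r + (1)*c*d*p^2*q*s + (1)*c^2*q^3*r + (-1)*c^2*p*q^2*s + (1)*b*d*q*r^2*s + (-1)*b*d*p*r*s^2 + (-1)*b*d*p*q*r^2 + (1)*b*d*p^2*r*s + (-1)*b*c*q*r*s^2 + (-2)*b*c*q^2*r^2 + (1)*b*c*p*s^3 + (4)*b*c*p*q*r*s + (-2)*b*c*p^2*s^2 + (-1)*b*c*p^2*q*r + (1)*b*c*p^3*s + (1)*b^2*q*r^3 + (-1)*b^2*p*r^2*s + (2)*a*d*q^2*r^2 + (-2)*a*d*p*q*r*s + (-1)*a*c*q^2*r*s + (1)*a*c*p*q*s^2 + (1)*a*c*p*q^2*r + (-1)*a*c*p^2*q*s + (-1)*a*b*q*r^2*s + (1)*a*b*p*r*s^2 + (1)*a*b*p*q*r^2 + (-1)*a*b*p^2*r*s + (-1)*a^2*q^2*r^2 +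 (1)*a^2*p*q*r*s) * hf2

theorem gmt_case_i (f g h : Matrix.SpecialLinearGroup (Fin 2) ℂ)
    (hf : (tr f) ^ 2 = 2)
    (hfg : ‖tr ⁅f, g⁆ - 1‖ = 1)
    (hh : h * f * h⁻¹ = g) :
    ‖(tr f) ^ 2 - 2‖ + ‖tr ⁅f, h⁆ - 1‖ = 1 := by
  subst hh
  rw [key_identity f h hf, norm_pow] at hfg
  have h1 : ‖tr ⁅f, h⁆ - 1‖ = 1 := by
    nlinarith [norm_nonneg (tr ⁅f, h⁆ - 1)]
  rw [hf, sub_self, norm_zero, zero_add, h1]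
end

section
/- If f, h ∈ SL(2,C) with tr²(f) = 2 and h f h⁻¹ = f⁻¹, then |tr²(f) − 2| + |tr[f,h] − 1| = 1. -/
open Matrix Complex
open scoped commutatorElement

theorem gmt_case_ii (f h : Matrix.SpecialLinearGroup (Fin 2) ℂ)
    (hf : (tr f) ^ 2 = 2)
    (hh : h * f * h⁻¹ = f⁻¹) :
    ‖(tr f) ^ 2 - 2‖ + ‖tr ⁅f, h⁆ - 1‖ = 1 := by
  have hinv : h * f⁻¹ * h⁻¹ = f := by
    have := congrArg (·⁻¹) hh
    simpa [mul_assoc, _root_.mul_inv_rev] using this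
  have hcomm : ⁅f, h⁆ = f ^ 2 := by
    have : ⁅f, h⁆ = f * (h * f⁻¹ * h⁻¹) := by
      simp [commutatorElement_def, mul_assoc]
    rw [this, hinv, sq]
  have hdet : Matrix.det (f : Matrix (Fin 2) (Fin 2) ℂ) = 1 := f.2
  rw [Matrix.det_fin_two] at hdet
  have htr2 : tr (f ^ 2) = (tr f) ^ 2 - 2 := by
    simp only [tr, pow_two, Matrix.SpecialLinearGroup.coe_mul, Matrix.trace_fin_two,
      Matrix.mul_apply, Fin.sum_univ_two]
    linear_combination (-2 : ℂ) * hdet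
  rw [hcomm, htr2, hf]
  norm_num
end

section
/- If f, g, h ∈ SL(2,C) with tr²(f) = 2, |tr[f,g] − 1| = 1, and h f h⁻¹ = f g⁻¹ f⁻¹, then |tr²(f) − 2| + |tr[f,h] − 1| = 1. -/
open Matrix Complex
open scoped commutatorElement

lemma tr_conj (a b : Matrix.SpecialLinearGroup (Fin 2) ℂ) : tr (a * b * a⁻¹) = tr b := by
  have : ((a * b * a⁻¹ : Matrix.SpecialLinearGroup (Fin 2) ℂ) : Matrix (Fin 2) (Fin 2) ℂ)
      = ((a * b : Matrix.SpecialLinearGroup (Fin 2) ℂ) : Matrix (Fin 2) (Fin 2) ℂ)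
        * ((a⁻¹ : Matrix.SpecialLinearGroup (Fin 2) ℂ) : Matrix (Fin 2) (Fin 2) ℂ) := rfl
  rw [tr, this, Matrix.trace_mul_comm, ← Matrix.SpecialLinearGroup.coe_mul]
  have : a⁻¹ * (a * b) = b := by group
  rw [this]; rfl

lemma tr_inv (a : Matrix.SpecialLinearGroup (Fin 2) ℂ) : tr a⁻¹ = tr a := by
  rw [tr, tr, Matrix.SpecialLinearGroup.coe_inv, Matrix.adjugate_fin_two]
  simp [Matrix.trace_fin_two]
  ring

lemma tr_fricke (a b : Matrix.SpecialLinearGroup (Fin 2) ℂ) :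
    tr (a * b) + tr (a * b⁻¹) = tr a * tr b := by
  have ha := a.2
  have hb := b.2
  simp only [Matrix.det_fin_two] at ha hb
  simp [tr, Matrix.SpecialLinearGroup.coe_inv, Matrix.adjugate_fin_two,
    Matrix.trace_fin_two, Matrix.mul_apply, Fin.sum_univ_two]
  ring

lemma tr_comm_fricke (a b : Matrix.SpecialLinearGroup (Fin 2) ℂ) :
    tr ⁅a, b⁆ = (tr a)^2 + (tr b)^2 + (tr (a*b))^2 - tr a * tr b * tr (a*b) - 2 := by
  have ha := a.2
  have hb := b.2
  simp only [Matrix.det_fin_two] at ha hb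
  set A := (a : Matrix (Fin 2) (Fin 2) ℂ) with hA
  set B := (b : Matrix (Fin 2) (Fin 2) ℂ) with hB
  show tr (a * b * a⁻¹ * b⁻¹) = _
  simp [tr, Matrix.SpecialLinearGroup.coe_inv, Matrix.adjugate_fin_two,
    Matrix.trace_fin_two, Matrix.mul_apply, Fin.sum_univ_two, ← hA, ← hB]
  linear_combination ((B 0 0 + B 1 1)^2 - 2) * ha
    + ((A 0 0 + A 1 1)^2 - 2*(A 0 0 * A 1 1 - A 0 1 * A 1 0)) * hb

lemma tr_one' : tr (1 : Matrix.SpecialLinearGroup (Fin 2) ℂ) = 2 := by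
  simp [tr, Matrix.trace_fin_two]

theorem gmt_case_iii (f g h : Matrix.SpecialLinearGroup (Fin 2) ℂ)
    (hf : (tr f) ^ 2 = 2)
    (hfg : ‖tr ⁅f, g⁆ - 1‖ = 1)
    (hh : h * f * h⁻¹ = f * g⁻¹ * f⁻¹) :
    ‖(tr f) ^ 2 - 2‖ + ‖tr ⁅f, h⁆ - 1‖ = 1 := by
  -- step 1: key polynomial identity
  have hw : tr (f * h⁻¹) = tr f * tr h - tr (f*h) := by linear_combination tr_fricke f h
  have hs : tr (h*h) = (tr h)^2 - 2 := by
    have e := tr_fricke h h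
    rw [mul_inv_cancel] at e
    linear_combination e - tr_one'
  have hu : tr (f*(h*f*h⁻¹)) = tr (f*h) * (tr f * tr h - tr (f*h)) - ((tr h)^2 - 2) := by
    have e := tr_fricke (f*h) (f*h⁻¹)
    rw [show (f*h)*(f*h⁻¹) = f*(h*f*h⁻¹) by group,
        show (f*h)*(f*h⁻¹)⁻¹ = f*(h*h)*f⁻¹ by group, tr_conj f (h*h)] at e
    linear_combination e + tr (f*h) * hw - hs
  have hu' : tr (f*(h*f*h⁻¹)) = tr f * tr h * tr (f*h) - (tr (f*h))^2 - (tr h)^2 + 2 := by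
    linear_combination hu
  have e2 := tr_comm_fricke f (h*f*h⁻¹)
  rw [tr_conj h f] at e2
  have e1 := tr_comm_fricke f h
  set u := tr (f*(h*f*h⁻¹)) with hudef
  have hc' : tr ⁅f, h*f*h⁻¹⁆ = u^2 - 2*u + 2 := by
    linear_combination e2 + (2 - u) * hf
  have hc : tr ⁅f, h⁆ - 1 = -(u - 1) := by
    linear_combination e1 + hu' + hf
  have key1 : tr ⁅f, h*f*h⁻¹⁆ - 1 = (tr ⁅f, h⁆ - 1)^2 := by
    linear_combination hc' + ((u - 1) - (tr ⁅f, h⁆ - 1)) * hc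
  -- step 2: tr ⁅f, h f h⁻¹⁆ = tr ⁅f, g⁆
  have key2 : tr ⁅f, h*f*h⁻¹⁆ = tr ⁅f, g⁆ := by
    rw [hh]
    have e : ⁅f, f*g⁻¹*f⁻¹⁆ = f * (g⁻¹ * ⁅f,g⁆⁻¹ * g⁻¹⁻¹) * f⁻¹ := by
      simp only [commutatorElement_def]
      group
    rw [e, tr_conj, tr_conj, tr_inv]
  -- conclude
  rw [hf]
  rw [show ‖(2:ℂ) - 2‖ = 0 by norm_num, zero_add]
  have habs : ‖tr ⁅f, h⁆ - 1‖ ^ 2 = 1 := by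
    rw [← norm_pow, ← key1, key2, hfg]
  have hnn : 0 ≤ ‖tr ⁅f, h⁆ - 1‖ := norm_nonneg _
  nlinarith [habs, hnn]
end

section
/- Let n ≥ 4 and let d ∈ ℂ satisfy cosh(d) = (1/4)(1 + cot²(π/n) − i√(3cot⁴(π/n) + 14cot²(π/n) − 5)). Define ρ_n and b_n as the matrices [[cos(π/n), i e^{±d/2} sin(π/n)], [i e^{∓d/2} sin(π/n), cos(π/n)]] respectively. Then |tr[ρ_n, b_n] − 1| = 1. -/
open Matrix Complex Real

noncomputable def rhoMat (n : ℕ) (d : ℂ) : Matrix (Fin 2) (Fin 2) ℂ :=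
  !![Complex.cos ((Real.pi : ℂ) / n), Complex.I * Complex.exp (d / 2) * Complex.sin ((Real.pi : ℂ) / n);
     Complex.I * Complex.exp (-d / 2) * Complex.sin ((Real.pi : ℂ) / n), Complex.cos ((Real.pi : ℂ) / n)]

noncomputable def bMat (n : ℕ) (d : ℂ) : Matrix (Fin 2) (Fin 2) ℂ :=
  !![Complex.cos ((Real.pi : ℂ) / n), Complex.I * Complex.exp (-d / 2) * Complex.sin ((Real.pi : ℂ) / n);
     Complex.I * Complex.exp (d / 2) * Complex.sin ((Real.pi : ℂ) / n), Complex.cos ((Real.pi : ℂ) / n)]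

noncomputable def cotPi (n : ℕ) : ℝ := Real.cos (Real.pi / n) / Real.sin (Real.pi / n)

/-- Generic right-inverse computation for our 2×2 matrices. -/
lemma aux_right_inv (c s E F : ℂ) (hEF : E * F = 1) (hpyth : s ^ 2 + c ^ 2 = 1) :
    !![c, Complex.I * E * s; Complex.I * F * s, c] *
      !![c, -(Complex.I * E * s); -(Complex.I * F * s), c] = 1 := by
  have e11 : c * c + Complex.I * E * s * -(Complex.I * F * s) = 1 := by
    linear_combination s ^ 2 * hEF + hpyth - s ^ 2 * E * F * Complex.I_sq
  have e12 : c * -(Complex.I * E * s) + Complex.I * E * s * c = 0 := by ring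
  have e21 : Complex.I * F * s * c + c * -(Complex.I * F * s) = 0 := by ring
  have e22 : Complex.I * F * s * -(Complex.I * E * s) + c * c = 1 := by
    linear_combination s ^ 2 * hEF + hpyth - s ^ 2 * E * F * Complex.I_sq
  rw [Matrix.mul_fin_two, e11, e12, e21, e22, Matrix.one_fin_two]

/-- Generic trace-of-commutator computation. -/
lemma aux_trace (c s E F ch : ℂ) (hEF : E * F = 1) (hch : 2 * ch = E ^ 2 + F ^ 2) :
    Matrix.trace
      (!![c, Complex.I * E * s; Complex.I * F * s, c] *
        !![c, Complex.I * F * s; Complex.I * E * s, c] *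
        !![c, -(Complex.I * E * s); -(Complex.I * F * s), c] *
        !![c, -(Complex.I * F * s); -(Complex.I * E * s), c])
      = 2 * c ^ 4 + 4 * c ^ 2 * s ^ 2 + (4 * ch ^ 2 - 2) * s ^ 4 := by
  rw [Matrix.mul_fin_two, Matrix.mul_fin_two, Matrix.mul_fin_two, Matrix.trace_fin_two_of]
  linear_combination (4 * c ^ 2 * s ^ 2 - 2 * s ^ 4 - 2 * s ^ 4 * E * F) * hEF
    + (s ^ 4 * E ^ 4 * (Complex.I ^ 2 - 1) + s ^ 4 * F ^ 4 * (Complex.I ^ 2 - 1)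
        - 4 * c ^ 2 * s ^ 2 * E * F) * Complex.I_sq
    - s ^ 4 * (2 * ch + E ^ 2 + F ^ 2) * hch

theorem abs_trace_comm_rho_b (n : ℕ) (hn : 4 ≤ n) (d : ℂ)
    (hd : Complex.cosh d =
      (1 / 4) * (1 + (cotPi n : ℂ) ^ 2 -
        Complex.I * (Real.sqrt (3 * (cotPi n) ^ 4 + 14 * (cotPi n) ^ 2 - 5) : ℝ))) :
    ‖(Matrix.trace (rhoMat n d * bMat n d * (rhoMat n d)⁻¹ * (bMat n d)⁻¹) - 1)‖ = 1 := by
  have hn4 : (4 : ℝ) ≤ n := by exact_mod_cast hn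
  have hppos := Real.pi_pos
  have hn0 : (0 : ℝ) < n := by linarith
  have h0 : 0 < Real.pi / n := by positivity
  have hlt : Real.pi / n ≤ Real.pi / 4 := by gcongr
  have hsr : 0 < Real.sin (Real.pi / n) :=
    Real.sin_pos_of_pos_of_lt_pi h0 (by linarith)
  have hcr : Real.sqrt 2 / 2 ≤ Real.cos (Real.pi / n) := by
    rw [← Real.cos_pi_div_four]
    exact Real.cos_le_cos_of_nonneg_of_le_pi h0.le (by linarith) hlt
  have hrp : Real.cos (Real.pi / n) ^ 2 + Real.sin (Real.pi / n) ^ 2 = 1 :=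
    Real.cos_sq_add_sin_sq _
  have hcr2 : (1 : ℝ) / 2 ≤ Real.cos (Real.pi / n) ^ 2 := by
    nlinarith [Real.sq_sqrt (by norm_num : (0:ℝ) ≤ 2), Real.sqrt_nonneg 2]
  have hk : cotPi n * Real.sin (Real.pi / n) = Real.cos (Real.pi / n) := by
    rw [cotPi]; field_simp
  have hcrpos : 0 < Real.cos (Real.pi / n) := by
    have h2p : 0 < Real.sqrt 2 := Real.sqrt_pos.mpr (by norm_num)
    linarith
  have hsc : Real.sin (Real.pi / n) ≤ Real.cos (Real.pi / n) := by
    nlinarith [hcrpos, hsr, hcr2, hrp]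
  have hk1 : 1 ≤ cotPi n := by
    rw [cotPi, le_div_iff₀ hsr]; linarith
  have hA : 0 ≤ 3 * (cotPi n) ^ 4 + 14 * (cotPi n) ^ 2 - 5 := by nlinarith
  have hW2 : (Real.sqrt (3 * (cotPi n) ^ 4 + 14 * (cotPi n) ^ 2 - 5)) ^ 2
      = 3 * (cotPi n) ^ 4 + 14 * (cotPi n) ^ 2 - 5 := Real.sq_sqrt hA
  -- complex abbreviations
  have hEF : Complex.exp (d / 2) * Complex.exp (-d / 2) = 1 := by
    rw [← Complex.exp_add, show d / 2 + -d / 2 = 0 by ring, Complex.exp_zero]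
  have hpyth : Complex.sin ((Real.pi : ℂ) / n) ^ 2 + Complex.cos ((Real.pi : ℂ) / n) ^ 2 = 1 :=
    Complex.sin_sq_add_cos_sq _
  have hch : 2 * Complex.cosh d = Complex.exp (d / 2) ^ 2 + Complex.exp (-d / 2) ^ 2 := by
    have h1 : Complex.exp (d / 2) ^ 2 = Complex.exp d := by
      rw [sq, ← Complex.exp_add]; ring_nf
    have h2 : Complex.exp (-d / 2) ^ 2 = Complex.exp (-d) := by
      rw [sq, ← Complex.exp_add]; ring_nf
    rw [h1, h2, Complex.two_cosh]
  have hρ : (rhoMat n d)⁻¹ =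
      !![Complex.cos ((Real.pi : ℂ) / n),
          -(Complex.I * Complex.exp (d / 2) * Complex.sin ((Real.pi : ℂ) / n));
         -(Complex.I * Complex.exp (-d / 2) * Complex.sin ((Real.pi : ℂ) / n)),
          Complex.cos ((Real.pi : ℂ) / n)] := by
    apply Matrix.inv_eq_right_inv
    exact aux_right_inv _ _ _ _ hEF hpyth
  have hb : (bMat n d)⁻¹ =
      !![Complex.cos ((Real.pi : ℂ) / n),
          -(Complex.I * Complex.exp (-d / 2) * Complex.sin ((Real.pi : ℂ) / n));
         -(Complex.I * Complex.exp (d / 2) * Complex.sin ((Real.pi : ℂ) / n)),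
          Complex.cos ((Real.pi : ℂ) / n)] := by
    apply Matrix.inv_eq_right_inv
    exact aux_right_inv _ _ _ _ (by linear_combination hEF) hpyth
  have key : Matrix.trace (rhoMat n d * bMat n d * (rhoMat n d)⁻¹ * (bMat n d)⁻¹)
      = 2 * Complex.cos ((Real.pi : ℂ) / n) ^ 4
        + 4 * Complex.cos ((Real.pi : ℂ) / n) ^ 2 * Complex.sin ((Real.pi : ℂ) / n) ^ 2
        + (4 * Complex.cosh d ^ 2 - 2) * Complex.sin ((Real.pi : ℂ) / n) ^ 4 := by
    rw [hρ, hb]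
    exact aux_trace _ _ _ _ _ hEF hch
  rw [key]
  -- pass to real cos/sin
  have harg : ((Real.pi / n : ℝ) : ℂ) = (Real.pi : ℂ) / n := by push_cast; ring
  have hC : Complex.cos ((Real.pi : ℂ) / n) = ((Real.cos (Real.pi / n) : ℝ) : ℂ) := by
    rw [Complex.ofReal_cos, harg]
  have hS : Complex.sin ((Real.pi : ℂ) / n) = ((Real.sin (Real.pi / n) : ℝ) : ℂ) := by
    rw [Complex.ofReal_sin, harg]
  rw [hC, hS]
  set cr := Real.cos (Real.pi / n) with hcrdef
  set sr := Real.sin (Real.pi / n) with hsrdef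
  set W := Real.sqrt (3 * (cotPi n) ^ 4 + 14 * (cotPi n) ^ 2 - 5) with hWdef
  have hsrC : ((sr : ℝ) : ℂ) ≠ 0 := by exact_mod_cast hsr.ne'
  have hKc : ((cotPi n : ℝ) : ℂ) = (cr : ℂ) / (sr : ℂ) := by
    rw [cotPi, ← hcrdef, ← hsrdef, Complex.ofReal_div]
  have hK2S : ((cotPi n : ℝ) : ℂ) ^ 2 * (sr : ℂ) ^ 2 = (cr : ℂ) ^ 2 := by
    rw [hKc]; field_simp
  have hpyC : ((sr : ℝ) : ℂ) ^ 2 + ((cr : ℝ) : ℂ) ^ 2 = 1 := by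
    have : sr ^ 2 + cr ^ 2 = 1 := by linarith
    exact_mod_cast congrArg (fun x : ℝ => (x : ℂ)) this
  have h1 : Complex.cosh d * (sr : ℂ) ^ 2 = 1 / 4 - Complex.I * ((sr ^ 2 * W : ℝ) : ℂ) / 4 := by
    rw [hd]; push_cast
    linear_combination ((1 : ℂ) / 4) * hK2S + ((1 : ℂ) / 4) * hpyC
  have hz : 2 * ((cr : ℝ) : ℂ) ^ 4 + 4 * ((cr : ℝ) : ℂ) ^ 2 * ((sr : ℝ) : ℂ) ^ 2
        + (4 * Complex.cosh d ^ 2 - 2) * ((sr : ℝ) : ℂ) ^ 4 - 1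
      = ((2 * cr ^ 4 + 4 * cr ^ 2 * sr ^ 2 - 3 / 4 - 2 * sr ^ 4 - (sr ^ 2 * W) ^ 2 / 4 : ℝ) : ℂ)
        + ((-(sr ^ 2 * W) / 2 : ℝ) : ℂ) * Complex.I := by
    have h2 : (4 * Complex.cosh d ^ 2 - 2) * ((sr : ℝ) : ℂ) ^ 4
        = 4 * (Complex.cosh d * (sr : ℂ) ^ 2) ^ 2 - 2 * ((sr : ℝ) : ℂ) ^ 4 := by ring
    rw [h2, h1]; push_cast
    linear_combination (((sr : ℂ) ^ 2 * (W : ℂ)) ^ 2 / 4) * Complex.I_sq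
  rw [hz, Complex.norm_def, Complex.normSq_add_mul_I]
  have hxval : 2 * cr ^ 4 + 4 * cr ^ 2 * sr ^ 2 - 3 / 4 - 2 * sr ^ 4 - (sr ^ 2 * W) ^ 2 / 4
      = (4 * cr ^ 2 - 3) / 2 := by
    linear_combination ((5 * cr ^ 2 - 3 * sr ^ 2 - 3) / 4) * hrp - (sr ^ 4 / 4) * hW2
      - ((cotPi n * sr + cr) * (3 * (cotPi n) ^ 2 * sr ^ 2 + 3 * cr ^ 2 + 14 * sr ^ 2) / 4) * hk
  have hfin : ((4 * cr ^ 2 - 3) / 2) ^ 2 + (-(sr ^ 2 * W) / 2) ^ 2 = 1 := by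
    linear_combination ((19 * cr ^ 2 - 5 * sr ^ 2 - 5) / 4) * hrp + (sr ^ 4 / 4) * hW2
      + ((cotPi n * sr + cr) * (3 * (cotPi n) ^ 2 * sr ^ 2 + 3 * cr ^ 2 + 14 * sr ^ 2) / 4) * hk
  rw [hxval, hfin, Real.sqrt_one]
end

section
/- Let n ≥ 4, d ∈ ℂ with cosh(d) = (1/4)(1 + cot²(π/n) − i√(3cot⁴(π/n) + 14cot²(π/n) − 5)), and define ρ_n, b_n as in the standard representation of the figure-eight orbifold group. Then for any real λ, |tr[ρ_n, b_n] − λ| = √((λ² − 3λ + 3) + 4(λ − 1)sin²(π/n)). -/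
open Matrix Complex Real

theorem abs_trace_comm_sub_lambda (n : ℕ) (hn : 4 ≤ n) (d : ℂ)
    (hd : Complex.cosh d =
      (1 / 4) * (1 + (cotPi n : ℂ) ^ 2 -
        Complex.I * (Real.sqrt (3 * (cotPi n) ^ 4 + 14 * (cotPi n) ^ 2 - 5) : ℝ)))
    (lam : ℝ) :
    ‖
        (Matrix.trace (rhoMat n d * bMat n d * (rhoMat n d)⁻¹ * (bMat n d)⁻¹) - (lam : ℂ))‖ =
      Real.sqrt ((lam ^ 2 - 3 * lam + 3) + 4 * (lam - 1) * (Real.sin (Real.pi / n)) ^ 2) := by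
  set c : ℝ := Real.cos (Real.pi / n) with hc
  set s : ℝ := Real.sin (Real.pi / n) with hs
  set k : ℝ := cotPi n with hkdef
  set t : ℝ := Real.sqrt (3 * k ^ 4 + 14 * k ^ 2 - 5) with htdef
  clear_value t k s c
  -- basic real facts
  have hn4 : (4 : ℝ) ≤ (n : ℝ) := by exact_mod_cast hn
  have hxpos : 0 < Real.pi / n := by positivity
  have hxlt : Real.pi / n < Real.pi := by
    apply div_lt_self Real.pi_pos
    linarith
  have hspos : 0 < s := by rw [hs]; exact Real.sin_pos_of_pos_of_lt_pi hxpos hxlt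
  have hxle4 : Real.pi / n ≤ Real.pi / 4 := by
    apply div_le_div_of_nonneg_left Real.pi_pos.le (by norm_num) hn4
  have hsc : s ≤ c := by
    have h1 : Real.sin (Real.pi / n) ≤ Real.sin (Real.pi / 4) :=
      Real.sin_le_sin_of_le_of_le_pi_div_two (by linarith [hxpos]) (by linarith [Real.pi_pos]) hxle4
    have h2 : Real.cos (Real.pi / 4) ≤ Real.cos (Real.pi / n) :=
      Real.cos_le_cos_of_nonneg_of_le_pi hxpos.le (by linarith [Real.pi_pos]) hxle4
    rw [Real.sin_pi_div_four] at h1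
    rw [Real.cos_pi_div_four] at h2
    rw [hs, hc]
    calc Real.sin (Real.pi / n) ≤ Real.sqrt 2 / 2 := h1
    _ ≤ Real.cos (Real.pi / n) := h2
  have hk1 : 1 ≤ k := by
    rw [hkdef, cotPi, ← hc, ← hs]
    exact (one_le_div hspos).2 hsc
  have hDelta : 0 ≤ 3 * k ^ 4 + 14 * k ^ 2 - 5 := by nlinarith
  have ht : t ^ 2 = 3 * k ^ 4 + 14 * k ^ 2 - 5 := by rw [htdef]; exact Real.sq_sqrt hDelta
  have hks : k * s = c := by
    rw [hkdef, cotPi, ← hc, ← hs]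
    field_simp
  have hpy : c ^ 2 + s ^ 2 = 1 := by rw [hc, hs]; exact Real.cos_sq_add_sin_sq _
  -- complex cast facts
  have h3C : (k : ℂ) * (s : ℂ) = (c : ℂ) := by exact_mod_cast hks
  have h4C : (c : ℂ) ^ 2 + (s : ℂ) ^ 2 = 1 := by exact_mod_cast hpy
  have h5C : (t : ℂ) ^ 2 = 3 * (k : ℂ) ^ 4 + 14 * (k : ℂ) ^ 2 - 5 := by exact_mod_cast ht
  have hI : Complex.I ^ 2 = -1 := Complex.I_sq
  -- the complex cos/sin are casts
  have hpi : ((Real.pi : ℂ) / n) = ((Real.pi / n : ℝ) : ℂ) := by push_cast; ring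
  have hC : Complex.cos ((Real.pi : ℂ) / n) = (c : ℂ) := by
    rw [hpi, hc]; exact (Complex.ofReal_cos _).symm
  have hS : Complex.sin ((Real.pi : ℂ) / n) = (s : ℂ) := by
    rw [hpi, hs]; exact (Complex.ofReal_sin _).symm
  -- exp facts
  set u : ℂ := Complex.exp (d / 2) with hu
  set v : ℂ := Complex.exp (-d / 2) with hv
  clear_value u v
  have h1 : u * v = 1 := by
    rw [hu, hv, ← Complex.exp_add, show d / 2 + -d / 2 = 0 by ring, Complex.exp_zero]
  have hu2 : u ^ 2 = Complex.exp d := by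
    rw [hu, sq, ← Complex.exp_add]; congr 1; ring
  have hv2 : v ^ 2 = Complex.exp (-d) := by
    rw [hv, sq, ← Complex.exp_add]; congr 1; ring
  have h2 : u ^ 2 + v ^ 2 = 1 / 2 + (k : ℂ) ^ 2 / 2 - 1 / 2 * Complex.I * (t : ℂ) := by
    rw [hu2, hv2, ← Complex.two_cosh, hd]
    ring
  -- inverses
  have hrinv : (rhoMat n d)⁻¹ =
      !![(c : ℂ), -(Complex.I * u * (s : ℂ)); -(Complex.I * v * (s : ℂ)), (c : ℂ)] := by
    apply Matrix.inv_eq_right_inv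
    rw [rhoMat, hC, hS, ← hu, ← hv, Matrix.mul_fin_two, Matrix.one_fin_two]
    ext i j
    fin_cases i <;> fin_cases j <;> simp [Matrix.one_apply] <;>
      first
        | ring1
        | linear_combination (-((s:ℂ)^2*u*v))*hI + (s:ℂ)^2*h1 + h4C
  have hbinv : (bMat n d)⁻¹ =
      !![(c : ℂ), -(Complex.I * v * (s : ℂ)); -(Complex.I * u * (s : ℂ)), (c : ℂ)] := by
    apply Matrix.inv_eq_right_inv
    rw [bMat, hC, hS, ← hu, ← hv, Matrix.mul_fin_two, Matrix.one_fin_two]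
    ext i j
    fin_cases i <;> fin_cases j <;> simp [Matrix.one_apply] <;>
      first
        | ring1
        | linear_combination (-((s:ℂ)^2*u*v))*hI + (s:ℂ)^2*h1 + h4C
  -- trace computation
  have key : Matrix.trace (rhoMat n d * bMat n d * (rhoMat n d)⁻¹ * (bMat n d)⁻¹)
      = ((2 * c ^ 2 - 1 / 2 : ℝ) : ℂ) + ((-(s ^ 2 * t / 2) : ℝ) : ℂ) * Complex.I := by
    rw [hrinv, hbinv, rhoMat, bMat, hC, hS, ← hu, ← hv,
      Matrix.mul_fin_two, Matrix.mul_fin_two, Matrix.mul_fin_two, Matrix.trace_fin_two_of]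
    push_cast
    linear_combination
      ((-5/4 : ℂ) + (-1) * (s:ℂ)^4 * v^4 + (-1) * (s:ℂ)^4 * u^4 + 6 * (c:ℂ)^2 +
          (-4) * (c:ℂ)^2 * (s:ℂ)^2 * u * v + (-4) * (c:ℂ)^4 + Complex.I^2 * (s:ℂ)^4 * v^4 +
          Complex.I^2 * (s:ℂ)^4 * u^4) * hI +
      ((-2 : ℂ) * (s:ℂ)^4 + (-2) * (s:ℂ)^4 * u * v + 4 * (c:ℂ)^2 * (s:ℂ)^2) * h1 +
      ((1/2 : ℂ) * (s:ℂ)^4 + (1/2) * (s:ℂ)^4 * (k:ℂ)^2 + (s:ℂ)^4 * v^2 + (s:ℂ)^4 * u^2 +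
          (-1/2) * Complex.I * (s:ℂ)^4 * (t:ℂ)) * h2 +
      ((1/4 : ℂ) * Complex.I^2 * (s:ℂ)^4) * h5C +
      ((1/2 : ℂ) * (s:ℂ)^3 * (k:ℂ) + (1/4) * (s:ℂ)^3 * (k:ℂ)^3 + (1/2) * (c:ℂ) * (s:ℂ)^2 +
          (1/4) * (c:ℂ) * (s:ℂ)^2 * (k:ℂ)^2 + (1/4) * (c:ℂ)^2 * (s:ℂ) * (k:ℂ) +
          (1/4) * (c:ℂ)^3 + (-1/2) * Complex.I * (s:ℂ)^3 * (k:ℂ) * (t:ℂ) +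
          (-1/2) * Complex.I * (c:ℂ) * (s:ℂ)^2 * (t:ℂ) +
          (7/2) * Complex.I^2 * (s:ℂ)^3 * (k:ℂ) + (3/4) * Complex.I^2 * (s:ℂ)^3 * (k:ℂ)^3 +
          (7/2) * Complex.I^2 * (c:ℂ) * (s:ℂ)^2 + (3/4) * Complex.I^2 * (c:ℂ) * (s:ℂ)^2 * (k:ℂ)^2 +
          (3/4) * Complex.I^2 * (c:ℂ)^2 * (s:ℂ) * (k:ℂ) + (3/4) * Complex.I^2 * (c:ℂ)^3) * h3C +
      ((-7/4 : ℂ) + (-7/4) * (s:ℂ)^2 + (25/4) * (c:ℂ)^2 +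
          (-1/2) * Complex.I * (s:ℂ)^2 * (t:ℂ) + (-5/4) * Complex.I^2 +
          (-5/4) * Complex.I^2 * (s:ℂ)^2 + (19/4) * Complex.I^2 * (c:ℂ)^2) * h4C
  rw [key]
  have hrw : ((2 * c ^ 2 - 1 / 2 : ℝ) : ℂ) + ((-(s ^ 2 * t / 2) : ℝ) : ℂ) * Complex.I - (lam : ℂ)
      = ((2 * c ^ 2 - 1 / 2 - lam : ℝ) : ℂ) + ((-(s ^ 2 * t / 2) : ℝ) : ℂ) * Complex.I := by
    push_cast; ring
  rw [hrw, Complex.norm_def, Complex.normSq_add_mul_I]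
  congr 1
  linear_combination (1/4 * s^4) * ht +
    (7/2 * s^3 * k + 3/4 * s^3 * k^3 + 7/2 * c * s^2 + 3/4 * c * s^2 * k^2 +
      3/4 * c^2 * s * k + 3/4 * c^3) * hks +
    (11/4 - 4 * lam - 5/4 * s^2 + 19/4 * c^2) * hpy
end

section
/- In the figure-eight knot group Γ = ⟨ρ, b | ρ⁻¹[b,ρ] = [b,ρ]b⟩, the automorphism τ defined by τ(ρ) = ρbρ⁻¹, τ(b) = b⁻¹ρb satisfies τ⁴ = id, and τ²(ρ) = b⁻¹, τ²(b) = ρ⁻¹. -/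
open FreeGroup
open scoped commutatorElement

def figRel : FreeGroup (Fin 2) :=
  (FreeGroup.of (0 : Fin 2))⁻¹ * ⁅FreeGroup.of (1 : Fin 2), FreeGroup.of (0 : Fin 2)⁆ *
    (⁅FreeGroup.of (1 : Fin 2), FreeGroup.of (0 : Fin 2)⁆ * FreeGroup.of (1 : Fin 2))⁻¹

def FigEightGroup : Type := PresentedGroup ({figRel} : Set (FreeGroup (Fin 2)))

noncomputable instance : Group FigEightGroup := by
  unfold FigEightGroup; infer_instance

noncomputable def ρ : FigEightGroup := PresentedGroup.of 0
noncomputable def b : FigEightGroup := PresentedGroup.of 1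

section Abstract

variable {G : Type*} [Group G]

/-- In a group satisfying the figure-eight relation, `τ²(x) = y⁻¹`. -/
lemma key2 (x y : G) (h : x⁻¹ * (y * x * y⁻¹ * x⁻¹) = y * x * y⁻¹ * x⁻¹ * y) :
    x * y * x⁻¹ * (y⁻¹ * x * y) * (x * y * x⁻¹)⁻¹ = y⁻¹ := by
  have hh : (y * x * y⁻¹ * x⁻¹ * y) * (x⁻¹ * (y * x * y⁻¹ * x⁻¹))⁻¹ = 1 := by
    rw [← h]; group
  have e : x * y * x⁻¹ * (y⁻¹ * x * y) * (x * y * x⁻¹)⁻¹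
      = (x * y * x⁻¹ * y⁻¹ * x) *
          ((y * x * y⁻¹ * x⁻¹ * y) * (x⁻¹ * (y * x * y⁻¹ * x⁻¹))⁻¹) *
          (x * y * x⁻¹ * y⁻¹ * x)⁻¹ * y⁻¹ := by group
  rw [e, hh]; group

/-- In a group satisfying the figure-eight relation, `τ²(y) = x⁻¹`. -/
lemma key3 (x y : G) (h : x⁻¹ * (y * x * y⁻¹ * x⁻¹) = y * x * y⁻¹ * x⁻¹ * y) :
    (y⁻¹ * x * y)⁻¹ * (x * y * x⁻¹) * (y⁻¹ * x * y) = x⁻¹ := by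
  have hh : (y * x * y⁻¹ * x⁻¹ * y) * (x⁻¹ * (y * x * y⁻¹ * x⁻¹))⁻¹ = 1 := by
    rw [← h]; group
  have e : (y⁻¹ * x * y)⁻¹ * (x * y * x⁻¹) * (y⁻¹ * x * y)
      = (x⁻¹ * y⁻¹) *
          ((y * x * y⁻¹ * x⁻¹ * y) * (x⁻¹ * (y * x * y⁻¹ * x⁻¹))⁻¹) *
          (x⁻¹ * y⁻¹)⁻¹ * x⁻¹ := by group
  rw [e, hh]; group

/-- The relator is preserved by `τ`. -/
lemma key1 (x y : G) (h : x⁻¹ * (y * x * y⁻¹ * x⁻¹) = y * x * y⁻¹ * x⁻¹ * y) :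
    (x * y * x⁻¹)⁻¹ *
      ((y⁻¹ * x * y) * (x * y * x⁻¹) * (y⁻¹ * x * y)⁻¹ * (x * y * x⁻¹)⁻¹) *
      (((y⁻¹ * x * y) * (x * y * x⁻¹) * (y⁻¹ * x * y)⁻¹ * (x * y * x⁻¹)⁻¹) *
        (y⁻¹ * x * y))⁻¹ = 1 := by
  have hh : (x⁻¹ * (y * x * y⁻¹ * x⁻¹)) * (y * x * y⁻¹ * x⁻¹ * y)⁻¹ = 1 := by
    rw [h]; group
  have hK : (y⁻¹ * x * y) * (x * y * x⁻¹) * (y⁻¹ * x * y)⁻¹ * (x * y * x⁻¹)⁻¹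
      = (y⁻¹ * x * y) * y := by
    have e : (y⁻¹ * x * y) * (x * y * x⁻¹) * (y⁻¹ * x * y)⁻¹ * (x * y * x⁻¹)⁻¹
        = (y⁻¹ * x * y * x * y * x⁻¹ * y⁻¹) *
            ((x⁻¹ * (y * x * y⁻¹ * x⁻¹)) * (y * x * y⁻¹ * x⁻¹ * y)⁻¹) *
            (y⁻¹ * x * y * x * y * x⁻¹ * y⁻¹)⁻¹ * ((y⁻¹ * x * y) * y) := by group
    rw [e, hh]; group
  rw [hK]
  have e2 : (x * y * x⁻¹)⁻¹ * ((y⁻¹ * x * y) * y) * (((y⁻¹ * x * y) * y) * (y⁻¹ * x * y))⁻¹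
      = (y⁻¹ * x) *
          ((x⁻¹ * (y * x * y⁻¹ * x⁻¹)) * (y * x * y⁻¹ * x⁻¹ * y)⁻¹) *
          (y⁻¹ * x)⁻¹ := by group
  rw [e2, hh]; group

end Abstract

/-- The defining relation holds in the figure-eight knot group. -/
lemma relFig : ρ⁻¹ * (b * ρ * b⁻¹ * ρ⁻¹) = b * ρ * b⁻¹ * ρ⁻¹ * b := by
  have h1 : (PresentedGroup.mk {figRel} figRel : FigEightGroup) = 1 := by
    change (QuotientGroup.mk figRel : PresentedGroup ({figRel} : Set (FreeGroup (Fin 2)))) = 1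
    rw [QuotientGroup.eq_one_iff]
    exact Subgroup.subset_normalClosure rfl
  have e : (PresentedGroup.mk {figRel} figRel : FigEightGroup)
      = (ρ⁻¹ * (b * ρ * b⁻¹ * ρ⁻¹)) * ((b * ρ * b⁻¹ * ρ⁻¹) * b)⁻¹ := by
    simp only [figRel, commutatorElement_def, map_mul, map_inv]
    rfl
  rw [e] at h1
  exact mul_inv_eq_one.mp h1

noncomputable def fτ : Fin 2 → FigEightGroup := ![ρ * b * ρ⁻¹, b⁻¹ * ρ * b]

lemma hfτ : ∀ r ∈ ({figRel} : Set (FreeGroup (Fin 2))), FreeGroup.lift fτ r = 1 := by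
  intro r hr
  rw [Set.mem_singleton_iff] at hr
  subst hr
  have k1 := key1 ρ b relFig
  have e : FreeGroup.lift fτ figRel
      = (ρ * b * ρ⁻¹)⁻¹ *
          ((b⁻¹ * ρ * b) * (ρ * b * ρ⁻¹) * (b⁻¹ * ρ * b)⁻¹ * (ρ * b * ρ⁻¹)⁻¹) *
          (((b⁻¹ * ρ * b) * (ρ * b * ρ⁻¹) * (b⁻¹ * ρ * b)⁻¹ * (ρ * b * ρ⁻¹)⁻¹) *
            (b⁻¹ * ρ * b))⁻¹ := by
    simp only [figRel, commutatorElement_def, map_mul, map_inv, FreeGroup.lift_apply_of]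
    simp [fτ]
  rw [e, k1]

noncomputable def τ0 : FigEightGroup →* FigEightGroup := PresentedGroup.toGroup hfτ

lemma τ0ρ : τ0 ρ = ρ * b * ρ⁻¹ := by
  show PresentedGroup.toGroup hfτ (PresentedGroup.of 0) = _
  rw [PresentedGroup.toGroup.of]
  simp [fτ]

lemma τ0b : τ0 b = b⁻¹ * ρ * b := by
  show PresentedGroup.toGroup hfτ (PresentedGroup.of 1) = _
  rw [PresentedGroup.toGroup.of]
  simp [fτ]

lemma τ0τ0ρ : τ0 (τ0 ρ) = b⁻¹ := by
  rw [τ0ρ, _root_.map_mul, _root_.map_mul, _root_.map_inv, τ0ρ, τ0b]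
  exact key2 ρ b relFig

lemma τ0τ0b : τ0 (τ0 b) = ρ⁻¹ := by
  rw [τ0b, _root_.map_mul, _root_.map_mul, _root_.map_inv, τ0ρ, τ0b]
  exact key3 ρ b relFig

lemma τ0four : ∀ x, τ0 (τ0 (τ0 (τ0 x))) = x := by
  have c4 : τ0.comp (τ0.comp (τ0.comp τ0)) = MonoidHom.id FigEightGroup := by
    refine PresentedGroup.ext fun i => ?_
    fin_cases i
    · show τ0 (τ0 (τ0 (τ0 ρ))) = ρ
      rw [τ0τ0ρ, _root_.map_inv, _root_.map_inv, τ0τ0b, inv_inv]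
    · show τ0 (τ0 (τ0 (τ0 b))) = b
      rw [τ0τ0b, _root_.map_inv, _root_.map_inv, τ0τ0ρ, inv_inv]
  intro x
  have := DFunLike.congr_fun c4 x
  simpa using this

theorem tau_order_four :
    ∃ τ : FigEightGroup ≃* FigEightGroup,
      τ ρ = ρ * b * ρ⁻¹ ∧ τ b = b⁻¹ * ρ * b ∧
      (∀ x, τ (τ (τ (τ x))) = x) ∧
      τ (τ ρ) = b⁻¹ ∧ τ (τ b) = ρ⁻¹ := by
  refine ⟨{ toFun := ⇑τ0, invFun := fun g => τ0 (τ0 (τ0 g)),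
            left_inv := fun g => τ0four g, right_inv := fun g => τ0four g,
            map_mul' := τ0.map_mul }, τ0ρ, τ0b, fun x => τ0four x, τ0τ0ρ, τ0τ0b⟩
end
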